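/- arXiv:2210.03810 — 3 statements merged into one kernel-verified Lean document; each statement's English description precedes it below -/
import Mathlib

section
/- If a differentiable function f: ℝ^d → ℝ satisfies the Polyak-Łojasiewicz condition f(x) - f* ≤ (1/(2μ))‖∇f(x)‖² for all x (where f* is the infimum of f and μ > 0), then f satisfies the quadratic growth condition: for every x, μ/2 · ‖x - x*‖² ≤ f(x) - f*, where x* is the point of the solution set nearest to x (assuming the set of minimizers is nonempty and closed). -/
open Filter Topology

/-- Weak Ekeland variational principle for continuous nonnegative functions on a
complete metric space. -/
theorem ekeland_weak {X : Type*} [MetricSpace X] [CompleteSpace X]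
    (h : X → ℝ) (hc : Continuous h) (hnn : ∀ z, 0 ≤ h z)
    {σ : ℝ} (hσ : 0 < σ) (x₀ : X) :
    ∃ y, h y ≤ h x₀ ∧ σ * dist x₀ y ≤ h x₀ - h y ∧ ∀ z, h y - σ * dist y z ≤ h z := by
  -- choice of almost-minimizers in the Ekeland slice
  have key : ∀ (n : ℕ) (w : X), ∃ z, (h z + σ * dist w z ≤ h w) ∧
      ∀ u, h u + σ * dist w u ≤ h w → h z ≤ h u + (1/2)^n := by
    intro n w
    set s : Set ℝ := h '' {z | h z + σ * dist w z ≤ h w} with hs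
    have hsne : s.Nonempty := ⟨h w, ⟨w, by simp, rfl⟩⟩
    have hbdd : BddBelow s := ⟨0, by rintro a ⟨z, _, rfl⟩; exact hnn z⟩
    obtain ⟨a, ⟨z, hz, rfl⟩, hlt⟩ := Real.lt_sInf_add_pos hsne (by positivity : (0:ℝ) < (1/2)^n)
    exact ⟨z, hz, fun u hu => (hlt.le.trans (by gcongr; exact csInf_le hbdd ⟨u, hu, rfl⟩))⟩
  choose F hF1 hF2 using key
  set x : ℕ → X := fun n => Nat.rec x₀ (fun n xn => F n xn) n with hx
  have hx0 : x 0 = x₀ := rfl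
  have hxs : ∀ n, x (n+1) = F n (x n) := fun n => rfl
  have step : ∀ n, h (x (n+1)) + σ * dist (x n) (x (n+1)) ≤ h (x n) := by
    intro n; rw [hxs]; exact hF1 n (x n)
  have mono : ∀ m n, m ≤ n → h (x n) + σ * dist (x m) (x n) ≤ h (x m) := by
    intro m n hmn
    induction n, hmn using Nat.le_induction with
    | base => simp
    | succ n hmn ih =>
      have := step n
      have htri : dist (x m) (x (n+1)) ≤ dist (x m) (x n) + dist (x n) (x (n+1)) :=
        dist_triangle _ _ _
      nlinarith [dist_nonneg (x := x m) (y := x n)]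
  have hanti : Antitone fun n => h (x n) := by
    refine antitone_nat_of_succ_le fun n => ?_
    have := step n
    nlinarith [dist_nonneg (x := x n) (y := x (n+1))]
  have hbdd : BddBelow (Set.range fun n => h (x n)) := ⟨0, by rintro a ⟨n, rfl⟩; exact hnn _⟩
  set ℓ : ℝ := ⨅ n, h (x n) with hℓ
  have hℓle : ∀ n, ℓ ≤ h (x n) := fun n => ciInf_le hbdd n
  have htend : Tendsto (fun n => h (x n)) atTop (𝓝 ℓ) := tendsto_atTop_ciInf hanti hbdd
  -- Cauchy
  have hcauchy : CauchySeq x := by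
    refine cauchySeq_of_le_tendsto_0 (fun N => (h (x N) - ℓ)/σ) (fun n m N hn hm => ?_) ?_
    · rcases le_total n m with hnm | hnm
      · have := mono n m hnm
        have h1 : h (x n) ≤ h (x N) := hanti hn
        have h2 : ℓ ≤ h (x m) := hℓle m
        rw [le_div_iff₀ hσ]
        nlinarith
      · have := mono m n hnm
        have h1 : h (x m) ≤ h (x N) := hanti hm
        have h2 : ℓ ≤ h (x n) := hℓle n
        rw [dist_comm, le_div_iff₀ hσ]
        nlinarith
    · have : Tendsto (fun N => (h (x N) - ℓ)/σ) atTop (𝓝 ((ℓ - ℓ)/σ)) :=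
        ((htend.sub tendsto_const_nhds).div_const σ)
      simpa using this
  obtain ⟨y, hy⟩ := cauchySeq_tendsto_of_complete hcauchy
  have hhy : h y = ℓ := tendsto_nhds_unique ((hc.continuousAt.tendsto.comp hy)) htend
  have hdisty : ∀ n, σ * dist (x n) y ≤ h (x n) - h y := by
    intro n
    have t1 : Tendsto (fun m => σ * dist (x n) (x m)) atTop (𝓝 (σ * dist (x n) y)) :=
      tendsto_const_nhds.mul
        (((continuous_const.dist continuous_id).continuousAt.tendsto).comp hy)
    have t2 : Tendsto (fun m => h (x n) - h (x m)) atTop (𝓝 (h (x n) - ℓ)) :=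
      tendsto_const_nhds.sub htend
    rw [hhy]
    refine le_of_tendsto_of_tendsto t1 t2 ?_
    filter_upwards [eventually_ge_atTop n] with m hm
    have := mono n m hm
    linarith
  refine ⟨y, ?_, ?_, ?_⟩
  · rw [hhy]; exact (hℓle 0).trans_eq (by rw [hx0])
  · have := hdisty 0; rwa [hx0] at this
  · intro z
    by_contra hcon
    push_neg at hcon
    have hzF : ∀ n, h z + σ * dist (x n) z ≤ h (x n) := by
      intro n
      have htri : dist (x n) z ≤ dist (x n) y + dist y z := dist_triangle _ _ _
      have := hdisty n
      nlinarith
    have hnext : ∀ n, h (x (n+1)) ≤ h z + (1/2)^n := by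
      intro n; rw [hxs]; exact hF2 n (x n) z (hzF n)
    have t3 : Tendsto (fun n => h z + (1/2:ℝ)^n) atTop (𝓝 (h z + 0)) :=
      tendsto_const_nhds.add (tendsto_pow_atTop_nhds_zero_of_lt_one (by norm_num) (by norm_num))
    have hle : ℓ ≤ h z + 0 := by
      refine le_of_tendsto_of_tendsto (htend.comp (tendsto_add_atTop_nat 1)) t3 ?_
      filter_upwards with n using hnext n
    rw [hhy] at hcon
    have := hdisty 0
    nlinarith [dist_nonneg (x := y) (y := z)]

open InnerProductSpace Set Filter Topology



set_option maxHeartbeats 1000000 in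
/-- PL-condition implies quadratic growth: if `f` is differentiable, its infimum `fstar`
is attained on a nonempty closed solution set `S`, and the PL-condition holds with constant
`μ > 0`, then for every `x` and every nearest solution `xstar`,
`μ/2 * ‖x - xstar‖² ≤ f x - fstar`. -/
theorem pl_implies_quadratic_growth
    {d : ℕ} (f : EuclideanSpace ℝ (Fin d) → ℝ) (fstar μ : ℝ)
    (hμ : 0 < μ)
    (hdiff : Differentiable ℝ f)
    (hlb : ∀ x, fstar ≤ f x)
    (S : Set (EuclideanSpace ℝ (Fin d)))
    (hS : S = {x | f x = fstar})
    (hSne : S.Nonempty) (hScl : IsClosed S)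
    (hPL : ∀ x, f x - fstar ≤ 1 / (2 * μ) * ‖gradient f x‖ ^ 2) :
    ∀ x xstar, xstar ∈ S → (∀ z ∈ S, ‖x - xstar‖ ≤ ‖x - z‖) →
      μ / 2 * ‖x - xstar‖ ^ 2 ≤ f x - fstar := by
  intro x xstar hxstar hnear
  set h : EuclideanSpace ℝ (Fin d) → ℝ := fun z => Real.sqrt (f z - fstar) with hhdef
  have hc : Continuous h := by simp only [hhdef]; exact (hdiff.continuous.sub continuous_const).sqrt
  have hnn : ∀ z, 0 ≤ h z := fun z => Real.sqrt_nonneg _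
  have hsq : ∀ z, h z ^ 2 = f z - fstar := fun z => Real.sq_sqrt (by linarith [hlb z])
  have key : ∀ σ : ℝ, 0 < σ → 2 * σ^2 < μ → σ * ‖x - xstar‖ ≤ h x := by
    intro σ hσ0 hσμ
    obtain ⟨y, hy1, hy2, hy3⟩ := ekeland_weak h hc hnn hσ0 x
    have hyS : y ∈ S := by
      rw [hS]
      by_contra hne
      simp only [mem_setOf_eq] at hne
      have hypos : 0 < f y - fstar := lt_of_le_of_ne (by linarith [hlb y]) (by
        intro hEq; exact hne (by linarith))
      have hhy : 0 < h y := Real.sqrt_pos.mpr hypos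
      -- directional derivative bound
      have hdir : ∀ v : EuclideanSpace ℝ (Fin d), -(2 * σ * h y * ‖v‖) ≤ (fderiv ℝ f y) v := by
        intro v
        have hlin : HasDerivAt (fun t : ℝ => y + t • v) v 0 := by
          simpa using ((hasDerivAt_id (0:ℝ)).smul_const v).const_add y
        have hφ : HasDerivAt (fun t : ℝ => f (y + t • v)) ((fderiv ℝ f y) v) 0 := by
          have := ((hdiff (y + (0:ℝ) • v)).hasFDerivAt.comp_hasDerivAt 0 hlin)
          simpa [Function.comp_def] using this
        have hslope : Tendsto (slope (fun t : ℝ => f (y + t • v)) 0) (𝓝[>] 0)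
            (𝓝 ((fderiv ℝ f y) v)) :=
          (hasDerivAt_iff_tendsto_slope.mp hφ).mono_left
            (nhdsWithin_mono _ (fun t ht => ne_of_gt ht))
        have hrhs : Tendsto (fun t : ℝ => -(σ * ‖v‖ * (h y + h (y + t • v)))) (𝓝[>] 0)
            (𝓝 (-(σ * ‖v‖ * (h y + h y)))) := by
          have : Continuous fun t : ℝ => -(σ * ‖v‖ * (h y + h (y + t • v))) :=
            (continuous_const.mul (continuous_const.add
              (hc.comp (continuous_const.add (continuous_id.smul continuous_const))))).neg
          have h2 : Tendsto (fun t : ℝ => -(σ * ‖v‖ * (h y + h (y + t • v)))) (𝓝[>] (0:ℝ))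
              (𝓝 (-(σ * ‖v‖ * (h y + h (y + (0:ℝ) • v))))) :=
            ((this.continuousAt (x := (0:ℝ))).tendsto).mono_left nhdsWithin_le_nhds
          simpa using h2
        have hineq : -(σ * ‖v‖ * (h y + h y)) ≤ (fderiv ℝ f y) v := by
          refine le_of_tendsto_of_tendsto hrhs hslope ?_
          filter_upwards [self_mem_nhdsWithin] with t ht
          simp only [mem_Ioi] at ht
          set z := y + t • v with hz
          have hdz : dist y z = t * ‖v‖ := by
            rw [dist_eq_norm]
            simp [hz, norm_smul, abs_of_pos ht]
          have h3 := hy3 z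
          have hsub : h y - h z ≤ σ * (t * ‖v‖) := by rw [← hdz]; linarith
          have hfz : f y - f z = (h y - h z) * (h y + h z) := by
            have := hsq y; have := hsq z; nlinarith
          have hmul : f y - f z ≤ σ * (t * ‖v‖) * (h y + h z) := by
            rw [hfz]
            exact mul_le_mul_of_nonneg_right hsub (by positivity)
          have : -(σ * ‖v‖ * (h y + h z)) ≤ (f z - f y) / t := by
            rw [le_div_iff₀ ht]; nlinarith
          simpa [slope_def_field, hz, div_eq_inv_mul] using this
        calc -(2 * σ * h y * ‖v‖) = -(σ * ‖v‖ * (h y + h y)) := by ring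
          _ ≤ _ := hineq
      -- gradient norm bound
      have hfg : ∀ v : EuclideanSpace ℝ (Fin d), (fderiv ℝ f y) v = inner ℝ (gradient f y) v := by
        intro v
        have : fderiv ℝ f y = toDual ℝ (EuclideanSpace ℝ (Fin d)) (gradient f y) :=
          ((toDual ℝ (EuclideanSpace ℝ (Fin d))).apply_symm_apply (fderiv ℝ f y)).symm
        rw [this, toDual_apply_apply]
      have hgb : ‖gradient f y‖ ≤ 2 * σ * h y := by
        have hd := hdir (-(gradient f y))
        rw [hfg] at hd
        have hin : (inner ℝ (gradient f y) (-(gradient f y)) : ℝ) = -(‖gradient f y‖^2) := by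
          rw [inner_neg_right, real_inner_self_eq_norm_sq]
        rw [hin] at hd
        have hnv : ‖-(gradient f y)‖ = ‖gradient f y‖ := norm_neg _
        rw [hnv] at hd
        rcases eq_or_lt_of_le (norm_nonneg (gradient f y)) with hg0 | hg0
        · rw [← hg0]; positivity
        · nlinarith
      have := hPL y
      have hhsq := hsq y
      have h2 : ‖gradient f y‖^2 ≤ (2 * σ * h y)^2 := by
        have := norm_nonneg (gradient f y)
        nlinarith
      have h3 : (f y - fstar) * (2*μ) ≤ ‖gradient f y‖^2 := by
        have hμ' : (0:ℝ) < 2*μ := by linarith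
        calc (f y - fstar) * (2*μ) ≤ (1/(2*μ) * ‖gradient f y‖^2) * (2*μ) := by nlinarith
          _ = ‖gradient f y‖^2 := by field_simp
      nlinarith [mul_pos hypos (by linarith : (0:ℝ) < μ - 2*σ^2)]
    have hxy : ‖x - xstar‖ ≤ dist x y := by
      rw [dist_eq_norm]; exact hnear y hyS
    calc σ * ‖x - xstar‖ ≤ σ * dist x y := by nlinarith [dist_nonneg (x := x) (y := y)]
      _ ≤ h x - h y := hy2
      _ ≤ h x := by linarith [hnn y]
  -- conclude
  by_contra hcon
  push_neg at hcon
  have hA0 : (0:ℝ) ≤ ‖x - xstar‖ := norm_nonneg _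
  have hB0 : 0 ≤ f x - fstar := by linarith [hlb x]
  have hApos : 0 < ‖x - xstar‖ := by
    by_contra hp
    push_neg at hp
    have h0 : ‖x - xstar‖ = 0 := le_antisymm hp hA0
    rw [h0] at hcon
    simp at hcon
    linarith
  have hq : (f x - fstar)/‖x - xstar‖^2 < μ/2 := by
    rw [div_lt_iff₀ (by positivity)]; nlinarith
  obtain ⟨c, hc1, hc2⟩ := exists_between hq
  have hcpos : 0 < c := lt_of_le_of_lt (by positivity) hc1
  have hσpos : 0 < Real.sqrt c := Real.sqrt_pos.mpr hcpos
  have hσsq : (Real.sqrt c)^2 = c := Real.sq_sqrt hcpos.le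
  have hk := key (Real.sqrt c) hσpos (by rw [hσsq]; linarith)
  have hkk : (Real.sqrt c)^2 * ‖x - xstar‖^2 ≤ (h x)^2 := by
    nlinarith [hnn x, mul_nonneg hσpos.le hA0]
  rw [hsq x, hσsq] at hkk
  rw [div_lt_iff₀ (by positivity)] at hc1
  nlinarith
end

section
/- Let f: ℝ^d → ℝ be L-smooth and satisfy the PL-condition with constant μ > 0 and minimum value f*. Consider the inexact gradient descent iteration x_{k+1} = x_k − γ g_k with γ = 1/L, where the gradient errors satisfy ‖g_k − ∇f(x_k)‖ ≤ Δ for all k. Then f(x_k) − f* ≤ (1 − μ/L)^k (f(x_0) − f*) + Δ²/(2μ). -/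
open InnerProductSpace


lemma my_descent {d : ℕ} (f : EuclideanSpace ℝ (Fin d) → ℝ) (L : ℝ) (hL : 0 < L)
    (hdiff : Differentiable ℝ f)
    (hsmooth : ∀ x y, ‖gradient f x - gradient f y‖ ≤ L * ‖x - y‖)
    (x v : EuclideanSpace ℝ (Fin d)) :
    f (x + v) ≤ f x + @inner ℝ _ _ (gradient f x) v + L / 2 * ‖v‖ ^ 2 := by
  set ψ : ℝ → ℝ := fun t => f (x + t • v) - t * @inner ℝ _ _ (gradient f x) v
      - L / 2 * ‖v‖ ^ 2 * t ^ 2 with hψ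
  have hder : ∀ t : ℝ, HasDerivAt ψ
      (@inner ℝ _ _ (gradient f (x + t • v)) v - @inner ℝ _ _ (gradient f x) v
        - L * ‖v‖ ^ 2 * t) t := by
    intro t
    have h1 : HasFDerivAt f (toDual ℝ _ (gradient f (x + t • v))) (x + t • v) :=
      ((hdiff _).hasGradientAt).hasFDerivAt
    have h2 : HasDerivAt (fun t : ℝ => x + t • v) v t := by
      simpa using ((hasDerivAt_id t).smul_const v).const_add x
    have h3 : HasDerivAt (fun t : ℝ => f (x + t • v))
        (@inner ℝ _ _ (gradient f (x + t • v)) v) t := by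
      have h := h1.comp_hasDerivAt t h2
      rw [toDual_apply_apply] at h
      exact h
    have h4 : HasDerivAt (fun t : ℝ => t * @inner ℝ _ _ (gradient f x) v)
        (@inner ℝ _ _ (gradient f x) v) t := by
      simpa using (hasDerivAt_id t).mul_const _
    have h5 : HasDerivAt (fun t : ℝ => L / 2 * ‖v‖ ^ 2 * t ^ 2)
        (L * ‖v‖ ^ 2 * t) t := by
      have := (hasDerivAt_pow 2 t).const_mul (L / 2 * ‖v‖ ^ 2)
      have e : L * ‖v‖ ^ 2 * t = L / 2 * ‖v‖ ^ 2 * ((2 : ℕ) * t ^ (2 - 1)) := by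
        norm_num
        ring
      rw [e]
      exact this
    exact (h3.sub h4).sub h5
  have hmono : AntitoneOn ψ (Set.Icc (0 : ℝ) 1) := by
    apply antitoneOn_of_deriv_nonpos (convex_Icc 0 1)
    · exact fun t _ => ((hder t).continuousAt).continuousWithinAt
    · exact fun t _ => ((hder t).differentiableAt).differentiableWithinAt
    · intro t ht
      rw [interior_Icc] at ht
      rw [(hder t).deriv]
      have hb : @inner ℝ _ _ (gradient f (x + t • v)) v - @inner ℝ _ _ (gradient f x) v
          ≤ L * ‖v‖ ^ 2 * t := by
        have h1 : @inner ℝ _ _ (gradient f (x + t • v)) v - @inner ℝ _ _ (gradient f x) v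
            = @inner ℝ _ _ (gradient f (x + t • v) - gradient f x) v := by
          rw [inner_sub_left]
        rw [h1]
        calc @inner ℝ _ _ (gradient f (x + t • v) - gradient f x) v
            ≤ ‖gradient f (x + t • v) - gradient f x‖ * ‖v‖ := real_inner_le_norm _ _
          _ ≤ L * ‖(x + t • v) - x‖ * ‖v‖ := by
              gcongr; exact hsmooth _ _
          _ = L * ‖v‖ ^ 2 * t := by
              rw [add_sub_cancel_left, norm_smul, Real.norm_eq_abs,
                abs_of_pos ht.1]
              ring
      linarith
  have := hmono (Set.left_mem_Icc.2 zero_le_one) (Set.right_mem_Icc.2 zero_le_one) zero_le_one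
  simp only [hψ] at this
  simp only [one_smul, zero_smul, add_zero, one_pow, zero_pow, one_mul, zero_mul,
    mul_zero, sub_zero] at this
  linarith

lemma my_step {d : ℕ} (f : EuclideanSpace ℝ (Fin d) → ℝ) (L Δ : ℝ) (hL : 0 < L)
    (hdiff : Differentiable ℝ f)
    (hsmooth : ∀ x y, ‖gradient f x - gradient f y‖ ≤ L * ‖x - y‖)
    (p w : EuclideanSpace ℝ (Fin d)) (hw : ‖w - gradient f p‖ ≤ Δ) :
    f (p - (1 / L) • w)
      ≤ f p - 1 / (2 * L) * ‖gradient f p‖ ^ 2 + 1 / (2 * L) * Δ ^ 2 := by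
  have key := my_descent f L hL hdiff hsmooth p (-((1 / L) • w))
  have hpt : p + -((1 / L) • w) = p - (1 / L) • w := by abel
  rw [hpt] at key
  set G := gradient f p with hG
  set e := w - G with he
  have hwe : w = G + e := by rw [he]; abel
  have hinner : @inner ℝ _ _ G (-((1 / L) • w))
      = -(1 / L) * (‖G‖ ^ 2 + @inner ℝ _ _ G e) := by
    rw [inner_neg_right, inner_smul_right, hwe, inner_add_right,
      real_inner_self_eq_norm_sq]
    ring
  have hnorm : ‖(-((1 / L) • w))‖ ^ 2 = (1 / L) ^ 2 * ‖w‖ ^ 2 := by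
    rw [norm_neg, norm_smul, Real.norm_eq_abs, abs_of_pos (by positivity : (0:ℝ) < 1 / L)]
    ring
  have hw2 : ‖w‖ ^ 2 = ‖G‖ ^ 2 + 2 * @inner ℝ _ _ G e + ‖e‖ ^ 2 := by
    rw [hwe]; exact norm_add_sq_real G e
  have hesq : ‖e‖ ^ 2 ≤ Δ ^ 2 := by
    have h0 : (0:ℝ) ≤ ‖e‖ := norm_nonneg _
    nlinarith [hw]
  rw [hinner, hnorm, hw2] at key
  have hL' : (0:ℝ) < 1 / L := by positivity
  have heq : f p + -(1 / L) * (‖G‖ ^ 2 + @inner ℝ _ _ G e)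
      + L / 2 * ((1 / L) ^ 2 * (‖G‖ ^ 2 + 2 * @inner ℝ _ _ G e + ‖e‖ ^ 2))
      = f p - 1 / (2 * L) * ‖G‖ ^ 2 + 1 / (2 * L) * ‖e‖ ^ 2 := by
    field_simp
    ring
  rw [heq] at key
  have : 1 / (2 * L) * ‖e‖ ^ 2 ≤ 1 / (2 * L) * Δ ^ 2 := by
    have : (0:ℝ) < 1 / (2 * L) := by positivity
    nlinarith
  linarith


/-- Inexact gradient descent under the PL-condition: if `f` is `L`-smooth, satisfies the
PL-condition with constant `μ > 0` and minimum value `fstar`, and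
`x (k+1) = x k - (1/L) • g k` with `‖g k - ∇f (x k)‖ ≤ Δ`, then
`f (x k) - fstar ≤ (1 - μ/L)^k (f (x 0) - fstar) + Δ²/(2μ)`. -/
theorem inexact_gd_pl_convergence
    {d : ℕ} (f : EuclideanSpace ℝ (Fin d) → ℝ)
    (L μ Δ fstar : ℝ) (hL : 0 < L) (hμ : 0 < μ) (hΔ : 0 ≤ Δ)
    (hdiff : Differentiable ℝ f)
    (hsmooth : ∀ x y, ‖gradient f x - gradient f y‖ ≤ L * ‖x - y‖)
    (hlb : ∀ x, fstar ≤ f x)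
    (hPL : ∀ x, f x - fstar ≤ 1 / (2 * μ) * ‖gradient f x‖ ^ 2)
    (x g : ℕ → EuclideanSpace ℝ (Fin d))
    (hiter : ∀ k, x (k + 1) = x k - (1 / L) • g k)
    (herr : ∀ k, ‖g k - gradient f (x k)‖ ≤ Δ) :
    ∀ k, f (x k) - fstar ≤ (1 - μ / L) ^ k * (f (x 0) - fstar) + Δ ^ 2 / (2 * μ) := by
  have key_lb : ∀ p, 1 / (2 * L) * ‖gradient f p‖ ^ 2 ≤ f p - fstar := by
    intro p
    have h := my_step f L 0 hL hdiff hsmooth p (gradient f p) (by simp)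
    have h2 := hlb (p - (1 / L) • gradient f p)
    have h0 : (0:ℝ) ^ 2 = 0 := by norm_num
    rw [h0, mul_zero] at h
    linarith
  by_cases hμL : μ ≤ L
  · have hρ0 : 0 ≤ 1 - μ / L := by
      have : μ / L ≤ 1 := (div_le_one hL).mpr hμL
      linarith
    intro k
    induction k with
    | zero =>
      have : (0:ℝ) ≤ Δ ^ 2 / (2 * μ) := by positivity
      simpa using by linarith
    | succ k ih =>
      have hstep := my_step f L Δ hL hdiff hsmooth (x k) (g k) (herr k)
      rw [← hiter k] at hstep
      have hpl := hPL (x k)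
      have hN : (0:ℝ) ≤ ‖gradient f (x k)‖ ^ 2 := by positivity
      have h1 : f (x (k + 1)) - fstar
          ≤ (1 - μ / L) * (f (x k) - fstar) + Δ ^ 2 / (2 * L) := by
        have hmul : μ / L * (f (x k) - fstar) ≤ 1 / (2 * L) * ‖gradient f (x k)‖ ^ 2 := by
          calc μ / L * (f (x k) - fstar)
              ≤ μ / L * (1 / (2 * μ) * ‖gradient f (x k)‖ ^ 2) :=
                mul_le_mul_of_nonneg_left hpl (le_of_lt (div_pos hμ hL))
            _ = 1 / (2 * L) * ‖gradient f (x k)‖ ^ 2 := by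
                field_simp
        have : Δ ^ 2 / (2 * L) = 1 / (2 * L) * Δ ^ 2 := by ring
        rw [this]
        linarith
      have h2 : (1 - μ / L) * (f (x k) - fstar)
          ≤ (1 - μ / L) * ((1 - μ / L) ^ k * (f (x 0) - fstar) + Δ ^ 2 / (2 * μ)) :=
        mul_le_mul_of_nonneg_left ih hρ0
      have h3 : (1 - μ / L) * ((1 - μ / L) ^ k * (f (x 0) - fstar) + Δ ^ 2 / (2 * μ))
          + Δ ^ 2 / (2 * L)
          = (1 - μ / L) ^ (k + 1) * (f (x 0) - fstar) + Δ ^ 2 / (2 * μ) := by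
        rw [pow_succ]
        have e : Δ ^ 1 * Δ / (2 * L) = μ / L * (Δ ^ 1 * Δ / (2 * μ)) := by
          field_simp
        rw [e]
        ring
      linarith
  · push_neg at hμL
    have hzero : ∀ p, f p = fstar := by
      intro p
      have h1 := key_lb p
      have h2 := hPL p
      have hN : (0:ℝ) ≤ ‖gradient f p‖ ^ 2 := by positivity
      have hlt : 1 / (2 * μ) < 1 / (2 * L) := by
        apply one_div_lt_one_div_of_lt
        · positivity
        · linarith
      have hN0 : ‖gradient f p‖ ^ 2 ≤ 0 := by nlinarith
      have := hlb p
      have hle : f p - fstar ≤ 0 := by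
        have hx : 1 / (2 * μ) * ‖gradient f p‖ ^ 2 ≤ 0 :=
          mul_nonpos_of_nonneg_of_nonpos (by positivity) hN0
        linarith
      linarith
    intro k
    rw [hzero (x k), hzero (x 0)]
    have : (0:ℝ) ≤ Δ ^ 2 / (2 * μ) := by positivity
    simpa using by linarith
end

section
/- (Descent lemma with biased stochastic gradient, one-step estimate.) Let f: ℝ^d → ℝ be L-smooth and satisfy the PL-condition with constant μ > 0. Fix γ ∈ (0, 1/L]. Suppose g = ∇f(x) + b + n where ‖b‖ ≤ δ, n is a random vector with E[n] = 0 and E‖n‖² ≤ σ². Then for x⁺ = x − γ g: E[f(x⁺)] − f* ≤ (1 − γμ)(f(x) − f*) + (γ/2)δ² + (γ²L/2)σ². -/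
open MeasureTheory

lemma descent_lemma_aux {d : ℕ} (f : EuclideanSpace ℝ (Fin d) → ℝ) (L : ℝ) (hL : 0 ≤ L)
    (hdiff : Differentiable ℝ f)
    (hsmooth : ∀ x y, ‖gradient f x - gradient f y‖ ≤ L * ‖x - y‖)
    (x y : EuclideanSpace ℝ (Fin d)) :
    f y ≤ f x + inner ℝ (gradient f x) (y - x) + L / 2 * ‖y - x‖ ^ 2 := by
  set u := y - x with hu
  have hcont : Continuous (gradient f) := by
    have : LipschitzWith (Real.toNNReal L) (gradient f) := by
      apply LipschitzWith.of_dist_le_mul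
      intro a b
      rw [dist_eq_norm, dist_eq_norm]
      calc ‖gradient f a - gradient f b‖ ≤ L * ‖a - b‖ := hsmooth a b
        _ = Real.toNNReal L * ‖a - b‖ := by rw [Real.coe_toNNReal L hL]
    exact this.continuous
  have hpath : ∀ t : ℝ,
      HasDerivAt (fun t : ℝ => f (x + t • u)) (inner ℝ (gradient f (x + t • u)) u : ℝ) t := by
    intro t
    have h1 : HasDerivAt (fun t : ℝ => x + t • u) u t := by
      simpa using ((hasDerivAt_id t).smul_const u).const_add x
    have h2 := ((hdiff (x + t • u)).hasGradientAt).hasFDerivAt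
    have := h2.comp_hasDerivAt t h1
    simpa [InnerProductSpace.toDual_apply_apply, Function.comp_def] using this
  have hintcont : Continuous fun t : ℝ => (inner ℝ (gradient f (x + t • u)) u : ℝ) :=
    (hcont.comp (by continuity)).inner continuous_const
  have hftc : f (x + (1:ℝ) • u) - f (x + (0:ℝ) • u)
      = ∫ t in (0:ℝ)..1, (inner ℝ (gradient f (x + t • u)) u : ℝ) := by
    rw [intervalIntegral.integral_eq_sub_of_hasDerivAt (fun t _ => hpath t)
      (hintcont.intervalIntegrable 0 1)]
  have hmono : ∫ t in (0:ℝ)..1, (inner ℝ (gradient f (x + t • u)) u : ℝ)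
      ≤ ∫ t in (0:ℝ)..1, ((inner ℝ (gradient f x) u : ℝ) + L * ‖u‖ ^ 2 * t) := by
    apply intervalIntegral.integral_mono_on (by norm_num)
      (hintcont.intervalIntegrable 0 1)
      ((by fun_prop : Continuous fun t : ℝ => (inner ℝ (gradient f x) u : ℝ) + L * ‖u‖ ^ 2 * t).intervalIntegrable 0 1)
    intro t ht
    obtain ⟨ht0, ht1⟩ := Set.mem_Icc.mp ht
    have hsplit : (inner ℝ (gradient f (x + t • u)) u : ℝ)
        = inner ℝ (gradient f x) u + inner ℝ (gradient f (x + t • u) - gradient f x) u := by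
      rw [inner_sub_left]; ring
    rw [hsplit]
    have hbd : (inner ℝ (gradient f (x + t • u) - gradient f x) u : ℝ)
        ≤ L * ‖u‖ ^ 2 * t := by
      calc (inner ℝ (gradient f (x + t • u) - gradient f x) u : ℝ)
          ≤ ‖gradient f (x + t • u) - gradient f x‖ * ‖u‖ := real_inner_le_norm _ _
        _ ≤ (L * ‖x + t • u - x‖) * ‖u‖ := by
            apply mul_le_mul_of_nonneg_right (hsmooth _ _) (norm_nonneg _)
        _ = L * ‖u‖ ^ 2 * t := by
            have : x + t • u - x = t • u := by abel
            rw [this, norm_smul, Real.norm_eq_abs, abs_of_nonneg ht0]; ring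
    linarith
  have hrhs : ∫ t in (0:ℝ)..1, ((inner ℝ (gradient f x) u : ℝ) + L * ‖u‖ ^ 2 * t)
      = inner ℝ (gradient f x) u + L / 2 * ‖u‖ ^ 2 := by
    rw [intervalIntegral.integral_add (intervalIntegrable_const)
      ((by fun_prop : Continuous fun t : ℝ => L * ‖u‖ ^ 2 * t).intervalIntegrable 0 1),
      intervalIntegral.integral_const, intervalIntegral.integral_const_mul, integral_id]
    simp
    ring
  have h0 : x + (0:ℝ) • u = x := by simp
  have h1 : x + (1:ℝ) • u = y := by simp [hu]
  rw [h0, h1] at hftc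
  linarith [hftc, hmono, hrhs.le, hrhs.ge]

set_option maxHeartbeats 1000000 in
/-- One-step estimate with a biased stochastic gradient: `g = ∇f(x) + b + n` with `‖b‖ ≤ δ`,
`E[n] = 0`, `E‖n‖² ≤ σ²`; then for `x⁺ = x - γ g`:
`E[f x⁺] - f* ≤ (1 - γμ)(f x - f*) + (γ/2)δ² + (γ²L/2)σ²`. -/
theorem one_step_biased_stochastic_descent
    {d : ℕ} {Ω : Type*} [MeasurableSpace Ω] (P : Measure Ω) [IsProbabilityMeasure P]
    (f : EuclideanSpace ℝ (Fin d) → ℝ)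
    (L μ γ δ σ fstar : ℝ) (hL : 0 < L) (hμ : 0 < μ)
    (hγ : 0 < γ) (hγL : γ ≤ 1 / L) (hδ : 0 ≤ δ) (hσ : 0 ≤ σ)
    (hdiff : Differentiable ℝ f)
    (hsmooth : ∀ x y, ‖gradient f x - gradient f y‖ ≤ L * ‖x - y‖)
    (hlb : ∀ x, fstar ≤ f x)
    (hPL : ∀ x, f x - fstar ≤ 1 / (2 * μ) * ‖gradient f x‖ ^ 2)
    (x b : EuclideanSpace ℝ (Fin d))
    (hb : ‖b‖ ≤ δ)
    (noise : Ω → EuclideanSpace ℝ (Fin d))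
    (hnoise_int : Integrable noise P)
    (hnoise_mean : ∫ ω, noise ω ∂P = 0)
    (hnoise_var : ∫ ω, ‖noise ω‖ ^ 2 ∂P ≤ σ ^ 2)
    (hnoise_sq_int : Integrable (fun ω => ‖noise ω‖ ^ 2) P)
    (xplus : Ω → EuclideanSpace ℝ (Fin d))
    (hstep : ∀ ω, xplus ω = x - γ • (gradient f x + b + noise ω))
    (hf_int : Integrable (fun ω => f (xplus ω)) P) :
    (∫ ω, f (xplus ω) ∂P) - fstar ≤
      (1 - γ * μ) * (f x - fstar) + γ / 2 * δ ^ 2 + γ ^ 2 * L / 2 * σ ^ 2 := by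
  set gx := gradient f x with hgx
  set v := gx + b with hv
  set C1 : ℝ := f x - γ * inner ℝ gx v + L * γ ^ 2 / 2 * ‖v‖ ^ 2 with hC1
  -- pointwise descent bound
  have hpt : ∀ ω, f (xplus ω) ≤ C1 + ((-γ) * (inner ℝ gx (noise ω) : ℝ)
      + (L * γ ^ 2 * (inner ℝ v (noise ω) : ℝ) + L * γ ^ 2 / 2 * ‖noise ω‖ ^ 2)) := by
    intro ω
    have hd := descent_lemma_aux f L hL.le hdiff hsmooth x (xplus ω)
    have hy : xplus ω - x = (-γ) • (v + noise ω) := by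
      rw [hstep ω, hv]
      rw [neg_smul]
      abel_nf
    rw [hy] at hd
    have hinner : (inner ℝ gx ((-γ) • (v + noise ω)) : ℝ)
        = -γ * (inner ℝ gx v + inner ℝ gx (noise ω)) := by
      rw [real_inner_smul_right, inner_add_right]
    have hnorm : ‖(-γ) • (v + noise ω)‖ ^ 2 = γ ^ 2 * ‖v + noise ω‖ ^ 2 := by
      rw [norm_smul, Real.norm_eq_abs, abs_neg, abs_of_pos hγ, mul_pow]
    have hexp : ‖v + noise ω‖ ^ 2
        = ‖v‖ ^ 2 + 2 * inner ℝ v (noise ω) + ‖noise ω‖ ^ 2 := norm_add_sq_real v (noise ω)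
    rw [hinner, hnorm, hexp] at hd
    calc f (xplus ω) ≤ f x + -γ * (inner ℝ gx v + inner ℝ gx (noise ω))
          + L / 2 * (γ ^ 2 * (‖v‖ ^ 2 + 2 * inner ℝ v (noise ω) + ‖noise ω‖ ^ 2)) := hd
      _ = C1 + ((-γ) * (inner ℝ gx (noise ω) : ℝ)
          + (L * γ ^ 2 * (inner ℝ v (noise ω) : ℝ) + L * γ ^ 2 / 2 * ‖noise ω‖ ^ 2)) := by
          rw [hC1]; ring
  -- integrability of the bound
  have hi1 : Integrable (fun ω => (inner ℝ gx (noise ω) : ℝ)) P := hnoise_int.const_inner gx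
  have hi2 : Integrable (fun ω => (inner ℝ v (noise ω) : ℝ)) P := hnoise_int.const_inner v
  have hiRest2 : Integrable (fun ω => L * γ ^ 2 * (inner ℝ v (noise ω) : ℝ)
      + L * γ ^ 2 / 2 * ‖noise ω‖ ^ 2) P :=
    (hi2.const_mul _).add (hnoise_sq_int.const_mul _)
  have hiRest : Integrable (fun ω => (-γ) * (inner ℝ gx (noise ω) : ℝ)
      + (L * γ ^ 2 * (inner ℝ v (noise ω) : ℝ) + L * γ ^ 2 / 2 * ‖noise ω‖ ^ 2)) P :=
    (hi1.const_mul _).add hiRest2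
  have hle : ∫ ω, f (xplus ω) ∂P ≤ ∫ ω, (C1 + ((-γ) * (inner ℝ gx (noise ω) : ℝ)
      + (L * γ ^ 2 * (inner ℝ v (noise ω) : ℝ) + L * γ ^ 2 / 2 * ‖noise ω‖ ^ 2))) ∂P :=
    integral_mono hf_int ((integrable_const C1).add hiRest) hpt
  have hz1 : ∫ ω, (inner ℝ gx (noise ω) : ℝ) ∂P = 0 := by
    rw [integral_inner hnoise_int, hnoise_mean, inner_zero_right]
  have hz2 : ∫ ω, (inner ℝ v (noise ω) : ℝ) ∂P = 0 := by
    rw [integral_inner hnoise_int, hnoise_mean, inner_zero_right]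
  have hval : ∫ ω, (C1 + ((-γ) * (inner ℝ gx (noise ω) : ℝ)
      + (L * γ ^ 2 * (inner ℝ v (noise ω) : ℝ) + L * γ ^ 2 / 2 * ‖noise ω‖ ^ 2))) ∂P
      = C1 + L * γ ^ 2 / 2 * ∫ ω, ‖noise ω‖ ^ 2 ∂P := by
    rw [integral_add (integrable_const C1) hiRest,
      integral_add (hi1.const_mul _) hiRest2,
      integral_add (hi2.const_mul _) (hnoise_sq_int.const_mul _),
      integral_const_mul, integral_const_mul, integral_const_mul, hz1, hz2,
      integral_const]
    simp
  rw [hval] at hle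
  -- algebraic conclusion
  have hinner_v : (inner ℝ gx v : ℝ) = ‖gx‖ ^ 2 + inner ℝ gx b := by
    rw [hv, inner_add_right, real_inner_self_eq_norm_sq]
  have hnorm_v : ‖v‖ ^ 2 = ‖gx‖ ^ 2 + 2 * inner ℝ gx b + ‖b‖ ^ 2 := norm_add_sq_real gx b
  have hLγ : L * γ ≤ 1 := by
    rw [le_div_iff₀ hL] at hγL; linarith
  have hPLx := hPL x
  have hbb : ‖b‖ ^ 2 ≤ δ ^ 2 := by
    have := norm_nonneg b
    nlinarith
  have hvn : (0:ℝ) ≤ ‖v‖ ^ 2 := by positivity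
  have hnoise_nonneg : (0:ℝ) ≤ ∫ ω, ‖noise ω‖ ^ 2 ∂P :=
    integral_nonneg fun ω => by positivity
  have hgrad : 2 * μ * (f x - fstar) ≤ ‖gx‖ ^ 2 := by
    have h2μ : (0:ℝ) < 2 * μ := by linarith
    rw [div_mul_eq_mul_div, one_mul, le_div_iff₀ h2μ] at hPLx
    linarith
  have hstep1 : C1 ≤ f x - γ * inner ℝ gx v + γ / 2 * ‖v‖ ^ 2 := by
    have : L * γ ^ 2 / 2 ≤ γ / 2 := by nlinarith
    have h2 := mul_le_mul_of_nonneg_right this hvn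
    rw [hC1]; linarith
  have hstep2 : f x - γ * inner ℝ gx v + γ / 2 * ‖v‖ ^ 2
      = f x + γ / 2 * (‖b‖ ^ 2 - ‖gx‖ ^ 2) := by
    rw [hinner_v, hnorm_v]; ring
  have hnoise_term : L * γ ^ 2 / 2 * ∫ ω, ‖noise ω‖ ^ 2 ∂P ≤ γ ^ 2 * L / 2 * σ ^ 2 := by
    have : (0:ℝ) ≤ L * γ ^ 2 / 2 := by positivity
    nlinarith
  have hbbγ := mul_le_mul_of_nonneg_left hbb (by positivity : (0:ℝ) ≤ γ / 2)
  have hgradγ := mul_le_mul_of_nonneg_left hgrad (by positivity : (0:ℝ) ≤ γ / 2)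
  have hexp : (1 - γ * μ) * (f x - fstar)
      = (f x - fstar) - γ / 2 * (2 * μ * (f x - fstar)) := by ring
  linarith [hle, hstep1, hstep2.le, hstep2.ge, hnoise_term, hbbγ, hgradγ, hexp.le, hexp.ge]
end
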